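/- Let φ_n(t) = exp((n-2)√t/(n+√t)) for integers n ≥ 2 and φ_0(t) = φ_1(t) = 1, for t ≥ 0. Then for all integers n ≥ j ≥ 2 with n ≥ 3 and all t ≥ 0, φ_j(t) ≤ φ_n(t)^{(j-2)/(n-2)} · (j/n)^{-(j-2)/4}. -/

import Mathlib

lemma lemA (x : ℝ) (hx : 1 ≤ x) : 2*(x-1)/(x+1) ≤ Real.log x := by
  have hx0 : (0:ℝ) < x := lt_of_lt_of_le one_pos hx
  have hx1 : x + 1 ≠ 0 := by positivity
  set f : ℝ → ℝ := fun x => Real.log x + 4/(x+1) - 2 with hf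
  have hd : ∀ y ∈ Set.Ioi (1:ℝ), HasDerivAt f (1/y - 4/(y+1)^2) y := by
    intro y hy
    simp only [Set.mem_Ioi] at hy
    have hy0 : (0:ℝ) < y := lt_trans one_pos hy
    have hy1 : y + 1 ≠ 0 := ne_of_gt (by linarith)
    have h1 : HasDerivAt Real.log y⁻¹ y := Real.hasDerivAt_log (ne_of_gt hy0)
    have h2 : HasDerivAt (fun z : ℝ => 4/(z+1)) ((0*(y+1) - 4*1)/(y+1)^2) y :=
      (hasDerivAt_const y (4:ℝ)).div ((hasDerivAt_id y).add_const 1) hy1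
    have := (h1.add h2).sub_const 2
    convert this using 1
    · rfl
    · rfl
    · rfl
    ring
  have mono : MonotoneOn f (Set.Ici 1) := by
    apply monotoneOn_of_deriv_nonneg (convex_Ici 1)
    · apply ContinuousOn.sub _ continuousOn_const
      apply ContinuousOn.add
      · exact Real.continuousOn_log.mono (fun y hy => by
          simp only [Set.mem_Ici, Set.mem_compl_iff, Set.mem_singleton_iff] at *
          intro h; rw [h] at hy; linarith)
      · exact ContinuousOn.div continuousOn_const (by fun_prop)
          (fun y hy => by simp only [Set.mem_Ici] at hy; exact ne_of_gt (by linarith))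
    · intro y hy
      rw [interior_Ici] at hy
      exact (hd y hy).differentiableAt.differentiableWithinAt
    · intro y hy
      rw [interior_Ici] at hy
      have hy0 : (0:ℝ) < y := lt_trans one_pos hy
      rw [(hd y hy).deriv]
      have : 1/y - 4/(y+1)^2 = (y-1)^2/(y*(y+1)^2) := by field_simp; ring
      rw [this]; positivity
  have h1 : f 1 ≤ f x := mono (by simp) (by simpa using hx) hx
  have hf1 : f 1 = 0 := by simp [hf]; norm_num
  have : 0 ≤ Real.log x + 4/(x+1) - 2 := by rw [← hf1]; exact h1
  have he : 2*(x-1)/(x+1) = 2 - 4/(x+1) := by field_simp; ring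
  rw [he]; linarith

lemma lemB (a b s : ℝ) (ha : 0 < a) (hab : a ≤ b) (hs : 0 ≤ s) :
    s*(b^2-a^2)/((a^2+s)*(b^2+s)) ≤ (b-a)/(b+a) := by
  have h1 : (0:ℝ) < (a^2+s)*(b^2+s) := mul_pos (by nlinarith) (by nlinarith)
  have h2 : (0:ℝ) < b + a := by linarith
  rw [div_le_div_iff₀ h1 h2]
  nlinarith [mul_nonneg (sub_nonneg.2 hab) (sq_nonneg (a*b - s)), sq_nonneg (a*b-s)]

noncomputable def phi (n : ℕ) (t : ℝ) : ℝ :=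
  if n ≤ 1 then 1 else Real.exp (((n : ℝ) - 2) * Real.sqrt t / ((n : ℝ) + Real.sqrt t))

theorem phi_le (n j : ℕ) (t : ℝ) (hj : 2 ≤ j) (hjn : j ≤ n) (hn : 3 ≤ n) (ht : 0 ≤ t) :
    phi j t ≤ phi n t ^ (((j : ℝ) - 2) / ((n : ℝ) - 2)) *
      ((j : ℝ) / (n : ℝ)) ^ (-(((j : ℝ) - 2) / 4)) := by
  have hjr : (2:ℝ) ≤ (j:ℝ) := by exact_mod_cast hj
  have hnr : (3:ℝ) ≤ (n:ℝ) := by exact_mod_cast hn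
  have hjnr : (j:ℝ) ≤ (n:ℝ) := by exact_mod_cast hjn
  have hj0 : (0:ℝ) < (j:ℝ) := by linarith
  have hn0 : (0:ℝ) < (n:ℝ) := by linarith
  set s := Real.sqrt t with hsdef
  have hs : 0 ≤ s := Real.sqrt_nonneg t
  set a := Real.sqrt (j:ℝ) with hadef
  set b := Real.sqrt (n:ℝ) with hbdef
  have ha2 : a^2 = (j:ℝ) := Real.sq_sqrt hj0.le
  have hb2 : b^2 = (n:ℝ) := Real.sq_sqrt hn0.le
  have ha0 : 0 < a := Real.sqrt_pos.2 hj0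
  have hb0 : 0 < b := Real.sqrt_pos.2 hn0
  have hab : a ≤ b := Real.sqrt_le_sqrt hjnr
  simp only [phi, if_neg (by omega : ¬ j ≤ 1), if_neg (by omega : ¬ n ≤ 1)]
  rw [Real.rpow_def_of_pos (Real.exp_pos _), Real.log_exp,
      Real.rpow_def_of_pos (by positivity : (0:ℝ) < (j:ℝ)/(n:ℝ)), ← Real.exp_add,
      Real.exp_le_exp]
  have hlog : Real.log ((j:ℝ)/(n:ℝ)) = 2*Real.log a - 2*Real.log b := by
    rw [Real.log_div (ne_of_gt hj0) (ne_of_gt hn0), ← ha2, ← hb2,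
        Real.log_pow, Real.log_pow]
    push_cast; ring
  rw [hlog]
  -- key inequality
  have hx : 1 ≤ b/a := (one_le_div ha0).2 hab
  have hA := lemA (b/a) hx
  have hlba : Real.log (b/a) = Real.log b - Real.log a :=
    Real.log_div (ne_of_gt hb0) (ne_of_gt ha0)
  have hfrac : 2*(b/a-1)/(b/a+1) = 2*(b-a)/(b+a) := by
    rw [div_eq_div_iff (by positivity) (by positivity)]
    field_simp
  rw [hfrac, hlba] at hA
  have hB := lemB a b s ha0 hab hs
  have key : s/((j:ℝ)+s) - s/((n:ℝ)+s) ≤ (Real.log b - Real.log a)/2 := by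
    have heq : s/((j:ℝ)+s) - s/((n:ℝ)+s) = s*(b^2-a^2)/((a^2+s)*(b^2+s)) := by
      rw [ha2, hb2]
      field_simp
      ring
    rw [heq]
    have h2 : (b-a)/(b+a) ≤ (Real.log b - Real.log a)/2 := by
      rw [div_le_div_iff₀ (by linarith) (by norm_num : (0:ℝ) < 2)]
      have := mul_le_mul_of_nonneg_right hA (le_of_lt (by linarith : (0:ℝ) < b+a))
      calc (b-a)*2 = 2*(b-a)/(b+a)*(b+a) := by field_simp
        _ ≤ (Real.log b - Real.log a)*(b+a) := this
    linarith
  -- assemble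
  have hn2 : (n:ℝ) - 2 ≠ 0 := by linarith
  have e1 : ((n:ℝ)-2)*s/((n:ℝ)+s) * (((j:ℝ)-2)/((n:ℝ)-2)) = ((j:ℝ)-2)*(s/((n:ℝ)+s)) := by
    field_simp
  rw [e1]
  have e2 : ((j:ℝ)-2)*s/((j:ℝ)+s) = ((j:ℝ)-2)*(s/((j:ℝ)+s)) := by ring
  rw [e2]
  have hj2 : (0:ℝ) ≤ (j:ℝ)-2 := by linarith
  nlinarith [mul_le_mul_of_nonneg_left key hj2]
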